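/- Let a and b be coprime positive integers. Then the number of (a,b)-Dyck paths equals (a+b−1)!/(a!·b!), i.e., equals (1/(a+b))·binomial(a+b, a). -/

import Mathlib

/-- A word over `{N, E}`, encoded as a `List Bool` with `true` = N (north step) and
`false` = E (east step), is an `(a,b)`-Dyck path if it has exactly `a` norths and
`b` easts and every prefix with `i` norths and `j` easts satisfies `b*i ≥ a*j`. -/
def IsDyckWord (a b : ℕ) (w : List Bool) : Prop :=
  w.count true = a ∧ w.count false = b ∧
    ∀ p : List Bool, p <+: w → a * p.count false ≤ b * p.count true

namespace Stmt3Aux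

open List Finset

/-- The weight of a word: `b·(#true) − a·(#false)`. -/
def fval (a b : ℕ) (w : List Bool) : ℤ :=
  (b : ℤ) * w.count true - (a : ℤ) * w.count false

lemma fval_nil (a b : ℕ) : fval a b [] = 0 := by simp [fval]

lemma fval_append (a b : ℕ) (x y : List Bool) :
    fval a b (x ++ y) = fval a b x + fval a b y := by
  simp only [fval, List.count_append]
  push_cast; ring

/-- Prefix sums. -/
def S (a b : ℕ) (w : List Bool) (k : ℕ) : ℤ := fval a b (w.take k)

lemma S_zero (a b : ℕ) (w : List Bool) : S a b w 0 = 0 := by simp [S, fval]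

lemma count_true_add_count_false (w : List Bool) :
    w.count true + w.count false = w.length := by
  induction w with
  | nil => simp
  | cons x w ih => cases x <;> simp [List.count_cons] <;> omega

lemma S_eq (a b : ℕ) (w : List Bool) (k : ℕ) :
    S a b w k = ((a : ℤ) + b) * ((w.take k).count true) - a * (min k w.length) := by
  have h := count_true_add_count_false (w.take k)
  rw [List.length_take] at h
  have h' : ((w.take k).count false : ℤ)
      = ((min k w.length : ℕ) : ℤ) - (w.take k).count true := by
    have h2 : ((w.take k).count true : ℤ) + (w.take k).count false
        = ((min k w.length : ℕ) : ℤ) := by exact_mod_cast h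
    linarith
  simp only [S, fval, h']
  push_cast
  ring

lemma S_of_le (a b : ℕ) (w : List Bool) {m : ℕ} (h : w.length ≤ m) :
    S a b w m = S a b w w.length := by
  rw [S, S, List.take_of_length_le h, List.take_length]

lemma S_length (a b : ℕ) {w : List Bool} (hT : w.count true = a)
    (hF : w.count false = b) : S a b w w.length = 0 := by
  simp only [S, List.take_length, fval, hT, hF]
  ring

/-- Injectivity of prefix sums on `[0, a+b)`, using coprimality. -/
lemma S_inj (a b : ℕ) (hab : Nat.Coprime a b) (w : List Bool)
    (hlen : w.length = a + b) {k k' : ℕ} (hk : k < w.length) (hk' : k' < w.length)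
    (h : S a b w k = S a b w k') : k = k' := by
  rw [S_eq, S_eq, min_eq_left hk.le, min_eq_left hk'.le] at h
  set t : ℤ := ((w.take k).count true : ℤ) with ht
  set t' : ℤ := ((w.take k').count true : ℤ) with ht'
  have hd : ((a + b : ℕ) : ℤ) ∣ (a : ℤ) * ((k : ℤ) - k') := by
    refine ⟨t - t', ?_⟩
    push_cast
    linarith
  have hcop : Nat.Coprime (a + b) a := by
    have : Nat.Coprime b a := hab.symm
    simpa [Nat.add_comm] using (Nat.coprime_add_self_left).mpr this
  have hcop' : IsCoprime ((a + b : ℕ) : ℤ) ((a : ℕ) : ℤ) :=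
    Nat.isCoprime_iff_coprime.mpr hcop
  have hd' : ((a + b : ℕ) : ℤ) ∣ ((k : ℤ) - k') := hcop'.dvd_of_dvd_mul_left hd
  have habs : |(k : ℤ) - k'| < ((a + b : ℕ) : ℤ) := by
    rw [abs_lt]
    constructor <;> [push_cast; push_cast] <;> omega
  have : (k : ℤ) - k' = 0 := Int.eq_zero_of_abs_lt_dvd hd' habs
  omega

lemma fval_take_rotate (a b : ℕ) (w : List Bool) {k : ℕ} (hk : k ≤ w.length) (j : ℕ) :
    fval a b ((w.rotate k).take j)
      = S a b w (k + j) - S a b w k + S a b w (min (j - (w.length - k)) k) := by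
  rw [List.rotate_eq_drop_append_take hk, List.take_append,
    fval_append, List.take_take, List.length_drop]
  have h2 : S a b w (k + j) = S a b w k + fval a b ((w.drop k).take j) := by
    rw [S, List.take_add, fval_append]; rfl
  have h3 : fval a b (w.take (min (j - (w.length - k)) k))
      = S a b w (min (j - (w.length - k)) k) := rfl
  rw [h3]
  linarith

/-- A rotation has all prefix weights nonnegative iff `k` minimizes `S`. -/
lemma prefix_nonneg_iff (a b : ℕ) (w : List Bool) {k : ℕ} (hk : k ≤ w.length)
    (h0 : S a b w w.length = 0) :
    (∀ j, 0 ≤ fval a b ((w.rotate k).take j)) ↔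
      (∀ m, m ≤ w.length → S a b w k ≤ S a b w m) := by
  constructor
  · intro h m hm
    by_cases hkm : k ≤ m
    · have := h (m - k)
      rw [fval_take_rotate a b w hk] at this
      have e1 : k + (m - k) = m := by omega
      have e2 : m - k - (w.length - k) = 0 := by omega
      rw [e1, e2] at this
      simpa [S_zero] using this
    · have := h (m + (w.length - k))
      rw [fval_take_rotate a b w hk] at this
      have e1 : k + (m + (w.length - k)) = m + w.length := by omega
      have e2 : m + (w.length - k) - (w.length - k) = m := by omega
      rw [e1, e2, min_eq_left (by omega : m ≤ k)] at this
      have e3 : S a b w (m + w.length) = 0 := by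
        rw [S_of_le a b w (by omega), h0]
      rw [e3] at this
      linarith
  · intro h j
    rw [fval_take_rotate a b w hk]
    by_cases hj : j ≤ w.length - k
    · have e2 : j - (w.length - k) = 0 := by omega
      rw [e2]
      simp only [Nat.zero_min, S_zero, add_zero]
      have := h (k + j) (by omega)
      linarith
    · have e1 : S a b w (k + j) = 0 := by
        rw [S_of_le a b w (by omega), h0]
      have hmin : min (j - (w.length - k)) k ≤ w.length := by omega
      have := h _ hmin
      linarith

lemma isDyck_iff_prefix_nonneg (a b : ℕ) (w : List Bool)
    (hT : w.count true = a) (hF : w.count false = b) :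
    IsDyckWord a b w ↔ ∀ p : List Bool, p <+: w → 0 ≤ fval a b p := by
  constructor
  · rintro ⟨-, -, h⟩ p hp
    have := h p hp
    have : (a : ℤ) * p.count false ≤ (b : ℤ) * p.count true := by exact_mod_cast this
    simp only [fval]
    linarith
  · intro h
    refine ⟨hT, hF, fun p hp => ?_⟩
    have := h p hp
    simp only [fval, sub_nonneg] at this
    exact_mod_cast this

lemma isDyck_rotate_iff (a b : ℕ) (w : List Bool)
    (hT : w.count true = a) (hF : w.count false = b) {k : ℕ} (hk : k ≤ w.length) :
    IsDyckWord a b (w.rotate k) ↔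
      (∀ m, m ≤ w.length → S a b w k ≤ S a b w m) := by
  have hT' : (w.rotate k).count true = a := by
    rw [(List.rotate_perm w k).count_eq]; exact hT
  have hF' : (w.rotate k).count false = b := by
    rw [(List.rotate_perm w k).count_eq]; exact hF
  rw [isDyck_iff_prefix_nonneg a b _ hT' hF',
    ← prefix_nonneg_iff a b w hk (S_length a b hT hF)]
  constructor
  · intro h j
    exact h _ (List.take_prefix j _)
  · intro h p hp
    rw [List.prefix_iff_eq_take.mp hp]
    exact h _

lemma count_ofFn : ∀ {n : ℕ} (v : Fin n → Bool),
    (List.ofFn v).count true = ∑ i, (if v i then 1 else 0) := by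
  intro n
  induction n with
  | zero => intro v; simp
  | succ m ih =>
    intro v
    rw [List.ofFn_succ, List.count_cons, ih, Fin.sum_univ_succ]
    cases h : v 0 <;> simp [h] <;> omega

/-- Functions `Fin n → Bool` are the same as subsets. -/
def boolEquiv (n : ℕ) : (Fin n → Bool) ≃ Finset (Fin n) where
  toFun v := Finset.univ.filter fun i => v i = true
  invFun s := fun i => decide (i ∈ s)
  left_inv v := by funext i; by_cases h : v i <;> simp [h]
  right_inv s := by ext i; simp

end Stmt3Aux

open Stmt3Aux in
/-- for coprime positive integers `a, b`, the number of
`(a,b)`-Dyck paths equals `(a+b−1)!/(a!·b!)`. -/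
theorem stmt3 (a b : ℕ) (ha : 0 < a) (hb : 0 < b) (hab : Nat.Coprime a b) :
    {w : List Bool | IsDyckWord a b w}.ncard * (a.factorial * b.factorial) =
      (a + b - 1).factorial := by
  classical
  set n := a + b with hn
  have hn0 : 0 < n := by omega
  set D : Set (List Bool) := {w | IsDyckWord a b w} with hD
  set W : Set (List Bool) := {w | w.length = n ∧ w.count true = a} with hW
  -- basic facts about members of W
  have hWfacts : ∀ w ∈ W, w.count true = a ∧ w.count false = b := by
    rintro w ⟨h1, h2⟩
    have := count_true_add_count_false w
    exact ⟨h2, by omega⟩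
  -- counting W
  have hcardW : W.ncard = n.choose a := by
    have himg : W = List.ofFn ''
        {v : Fin n → Bool | (List.ofFn v).count true = a} := by
      ext w
      constructor
      · rintro ⟨h1, h2⟩
        refine ⟨fun i : Fin n => w.getD i false, ?_, ?_⟩
        · show (List.ofFn _).count true = a
          have : List.ofFn (fun i : Fin n => w.getD i false) = w := by
            apply List.ext_getElem
            · simp [h1]
            · intro i hi hi'
              simp only [List.getElem_ofFn]
              exact List.getD_eq_getElem w false hi'
          rw [this]; exact h2
        · apply List.ext_getElem
          · simp [h1]
          · intro i hi hi'
            simp only [List.getElem_ofFn]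
            exact List.getD_eq_getElem w false hi'
      · rintro ⟨v, hv, rfl⟩
        exact ⟨by simp, hv⟩
    rw [himg, Set.ncard_image_of_injective _ List.ofFn_injective]
    rw [← Nat.card_coe_set_eq]
    have e1 : {v : Fin n → Bool // (List.ofFn v).count true = a} ≃
        {s : Finset (Fin n) // s.card = a} := by
      refine (Equiv.subtypeEquiv (boolEquiv n) ?_)
      intro v
      rw [count_ofFn]
      show (∑ i, (if v i then 1 else 0)) = a ↔
        (Finset.univ.filter fun i => v i = true).card = a
      rw [Finset.card_filter]
    have : Nat.card {v : Fin n → Bool // (List.ofFn v).count true = a}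
        = n.choose a := by
      rw [Nat.card_congr e1, Nat.card_eq_fintype_card, Fintype.card_finset_len,
        Fintype.card_fin]
    exact this
  -- the cycle-lemma bijection
  have hmem : ∀ (d : ↥D) (k : Fin n), (d : List Bool).rotate k ∈ W := by
    rintro ⟨d, hd⟩ k
    obtain ⟨h1, h2, -⟩ := hd
    have hlen : d.length = n := by
      have := count_true_add_count_false d
      omega
    constructor
    · simp [hlen]
    · rw [(List.rotate_perm d k).count_eq]; exact h1
  let e : ↥D × Fin n → ↥W := fun p => ⟨(p.1 : List Bool).rotate p.2, hmem p.1 p.2⟩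
  -- uniqueness of the Dyck rotation index
  have huniq : ∀ w ∈ W, ∀ k k' : ℕ, k < n → k' < n →
      IsDyckWord a b (w.rotate k) → IsDyckWord a b (w.rotate k') → k = k' := by
    intro w hw k k' hk hk' hd hd'
    obtain ⟨hT, hF⟩ := hWfacts w hw
    have hlen : w.length = n := hw.1
    rw [isDyck_rotate_iff a b w hT hF (by omega)] at hd hd'
    have h1 := hd k' (by omega)
    have h2 := hd' k (by omega)
    exact S_inj a b hab w (by omega) (by omega) (by omega) (le_antisymm h1 h2)
  have key : ∀ (u : List Bool) (j : ℕ), u.length = n → j < n →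
      (u.rotate j).rotate ((n - j) % n) = u := by
    intro u j hu hj
    have hlr : (u.rotate j).length = n := by simp [hu]
    rw [← hlr, List.rotate_mod, hlr, List.rotate_rotate]
    have hjn : j + (n - j) = n := by omega
    rw [hjn, ← hu, List.rotate_length]
  have hbij : Function.Bijective e := by
    constructor
    · rintro ⟨⟨d, hd⟩, ⟨k, hk⟩⟩ ⟨⟨d', hd'⟩, ⟨k', hk'⟩⟩ heq
      simp only [e, Subtype.mk_eq_mk] at heq
      have hdlen : d.length = n := by
        obtain ⟨h1, h2, -⟩ := hd
        have := count_true_add_count_false d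
        omega
      have hdlen' : d'.length = n := by
        obtain ⟨h1, h2, -⟩ := hd'
        have := count_true_add_count_false d'
        omega
      have hwW : d.rotate k ∈ W := hmem ⟨d, hd⟩ ⟨k, hk⟩
      have hback : d = (d.rotate k).rotate ((n - k) % n) := (key d k hdlen hk).symm
      have hback' : d' = (d.rotate k).rotate ((n - k') % n) := by
        rw [heq]; exact (key d' k' hdlen' hk').symm
      have hDyck1 : IsDyckWord a b ((d.rotate k).rotate ((n - k) % n)) := hback ▸ hd
      have hDyck2 : IsDyckWord a b ((d.rotate k).rotate ((n - k') % n)) := hback' ▸ hd'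
      have hjeq : (n - k) % n = (n - k') % n :=
        huniq _ hwW _ _ (Nat.mod_lt _ hn0) (Nat.mod_lt _ hn0) hDyck1 hDyck2
      have hkk' : k = k' := by
        have e1 : (n - k) % n = if k = 0 then 0 else n - k := by
          split
          · next h => simp [h]
          · next h => exact Nat.mod_eq_of_lt (by omega)
        have e2 : (n - k') % n = if k' = 0 then 0 else n - k' := by
          split
          · next h => simp [h]
          · next h => exact Nat.mod_eq_of_lt (by omega)
        rw [e1, e2] at hjeq
        split at hjeq <;> split at hjeq <;> omega
      subst hkk'
      have hdd : d = d' := by rw [hback, hback']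
      simp [hdd]
    · rintro ⟨w, hwW⟩
      obtain ⟨hT, hF⟩ := hWfacts w hwW
      have hwlen : w.length = n := hwW.1
      obtain ⟨m, hm, hmin⟩ := Finset.exists_min_image (Finset.range n)
        (S a b w) ⟨0, Finset.mem_range.mpr hn0⟩
      rw [Finset.mem_range] at hm
      have hS0 : S a b w w.length = 0 := S_length a b hT hF
      have hdDyck : IsDyckWord a b (w.rotate m) := by
        rw [isDyck_rotate_iff a b w hT hF (by omega)]
        intro m' hm'
        rcases eq_or_lt_of_le hm' with h | h
        · rw [h, hS0]
          have := hmin 0 (Finset.mem_range.mpr hn0)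
          rw [S_zero] at this
          exact this
        · exact hmin m' (Finset.mem_range.mpr (by omega))
      refine ⟨⟨⟨w.rotate m, hdDyck⟩, ⟨(n - m) % n, Nat.mod_lt _ hn0⟩⟩, ?_⟩
      simp only [e, Subtype.mk_eq_mk]
      exact key w m hwlen hm
  -- cardinalities
  have hcard : D.ncard * n = n.choose a := by
    have h1 : Nat.card (↥D × Fin n) = Nat.card ↥W :=
      Nat.card_congr (Equiv.ofBijective e hbij)
    have hfin : Nat.card (Fin n) = n := by simp
    rw [Nat.card_prod, hfin, Nat.card_coe_set_eq, Nat.card_coe_set_eq,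
      hcardW] at h1
    exact h1
  -- arithmetic
  have h2 : n.choose a * a.factorial * b.factorial = n.factorial := by
    have h3 := Nat.choose_mul_factorial_mul_factorial (show a ≤ n by omega)
    rwa [show n - a = b by omega] at h3
  have h4 : n.factorial = n * (n - 1).factorial := (Nat.mul_factorial_pred hn0.ne').symm
  have h5 : n * (D.ncard * (a.factorial * b.factorial)) = n * (n - 1).factorial := by
    calc n * (D.ncard * (a.factorial * b.factorial))
        = (D.ncard * n) * a.factorial * b.factorial := by ring
      _ = n.choose a * a.factorial * b.factorial := by rw [hcard]
      _ = n.factorial := h2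
      _ = n * (n - 1).factorial := h4
  have := Nat.eq_of_mul_eq_mul_left hn0 h5
  simpa [hD, hn] using this
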